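/- For every integer k ≥ 1, ∫_{-∞}^{∞} x^{2k} · e^{x/2}/(e^x + 1) dx = ((2k)!/4^k) · (ζ(2k+1, 1/4) − ζ(2k+1, 3/4)), where ζ(s, q) = Σ_{l=0}^{∞} 1/(l + q)^s is the Hurwitz zeta function. -/

import Mathlib

open Real Filter MeasureTheory

open Set

lemma aux_integrable (n : ℕ) {r : ℝ} (hr : 0 < r) :
    IntegrableOn (fun x : ℝ => x ^ n * Real.exp (-(r * x))) (Ioi 0) := by
  have h := integrableOn_rpow_mul_exp_neg_mul_rpow (p := 1) (s := n) (b := r)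
    (lt_of_lt_of_le neg_one_lt_zero (Nat.cast_nonneg n)) zero_lt_one hr
  refine h.congr_fun (fun x hx => ?_) measurableSet_Ioi
  dsimp only
  rw [Real.rpow_natCast, Real.rpow_one, neg_mul]

lemma aux_int (n : ℕ) {r : ℝ} (hr : 0 < r) :
    ∫ x in Ioi (0:ℝ), x ^ n * Real.exp (-(r * x)) = (n.factorial : ℝ) / r ^ (n + 1) := by
  have h := Real.integral_rpow_mul_exp_neg_mul_Ioi (a := (n : ℝ) + 1) (by positivity) hr
  rw [show ((n:ℝ) + 1 - 1) = (n:ℝ) by ring] at h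
  have h2 : ∫ x in Ioi (0:ℝ), x ^ n * Real.exp (-(r * x))
      = ∫ x in Ioi (0:ℝ), x ^ ((n:ℝ)) * Real.exp (-(r * x)) := by
    refine setIntegral_congr_fun measurableSet_Ioi (fun x hx => ?_)
    rw [Real.rpow_natCast]
  rw [h2, h, Real.Gamma_nat_eq_factorial]
  rw [show ((n:ℝ) + 1) = ((n + 1 : ℕ) : ℝ) by push_cast; ring, Real.rpow_natCast]
  rw [div_pow, one_pow]
  field_simp

lemma summable_aux {q : ℝ} (hq0 : 0 < q) (hq1 : q ≤ 1) {s : ℕ} (hs : 1 < s) :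
    Summable fun m : ℕ => 1 / ((m : ℝ) + q) ^ s := by
  have h1 : Summable (fun m : ℕ => 1 / ((m : ℝ) + 1) ^ s) := by
    have h := (Real.summable_one_div_nat_pow.mpr hs)
    have := (summable_nat_add_iff (f := fun n : ℕ => 1 / (n : ℝ) ^ s) 1).mpr h
    simpa using this
  refine Summable.of_nonneg_of_le (fun m => by positivity) (fun m => ?_)
    (h1.mul_left (1 / q ^ s))
  have hm : q * ((m : ℝ) + 1) ≤ (m : ℝ) + q := by nlinarith [Nat.cast_nonneg (α := ℝ) m]
  have h2 : (q * ((m : ℝ) + 1)) ^ s ≤ ((m : ℝ) + q) ^ s := by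
    apply pow_le_pow_left₀ (by positivity) hm
  rw [mul_pow] at h2
  rw [div_mul_div_comm, one_mul]
  rw [div_le_div_iff₀ (by positivity) (by positivity)]
  nlinarith [pow_pos (show (0:ℝ) < q by exact hq0) s, pow_pos (show (0:ℝ) < (m:ℝ)+1 by positivity) s]

lemma logistic_eq (x : ℝ) :
    Real.exp (-(x/2)) / (1 + Real.exp (-x)) = Real.exp (x/2) / (Real.exp x + 1) := by
  rw [div_eq_div_iff (by positivity) (by positivity)]
  have e1 : Real.exp (-(x/2)) * Real.exp x = Real.exp (x/2) := by
    rw [← Real.exp_add]; ring_nf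
  have e2 : Real.exp (x/2) * Real.exp (-x) = Real.exp (-(x/2)) := by
    rw [← Real.exp_add]; ring_nf
  nlinarith [e1, e2]

lemma sum_ident (n : ℕ) {x : ℝ} (hx : 0 < x) :
    ∑' m : ℕ, (x ^ n * Real.exp (-((2*(m:ℝ)+1/2) * x)) - x ^ n * Real.exp (-((2*(m:ℝ)+3/2) * x)))
      = x ^ n * (Real.exp (x/2) / (Real.exp x + 1)) := by
  set r := Real.exp (-x) with hrdef
  have hr0 : 0 < r := Real.exp_pos _
  have hr1 : r < 1 := Real.exp_lt_one_iff.mpr (by linarith)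
  have key : ∀ m : ℕ, x ^ n * Real.exp (-((2*(m:ℝ)+1/2) * x)) - x ^ n * Real.exp (-((2*(m:ℝ)+3/2) * x))
      = (x ^ n * (Real.exp (-(x/2)) * (1 - r))) * (r^2) ^ m := by
    intro m
    have ha : Real.exp (-((2*(m:ℝ)+1/2) * x)) = Real.exp (-(x/2)) * (r^2)^m := by
      rw [hrdef, ← pow_mul, ← Real.exp_nat_mul, ← Real.exp_add]
      congr 1
      push_cast; ring
    have hb : Real.exp (-((2*(m:ℝ)+3/2) * x)) = Real.exp (-(x/2)) * r * (r^2)^m := by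
      rw [hrdef, ← pow_mul, ← Real.exp_nat_mul, ← Real.exp_add, ← Real.exp_add]
      congr 1
      push_cast; ring
    rw [ha, hb]; ring
  rw [tsum_congr key, tsum_mul_left, tsum_geometric_of_lt_one (by positivity)
    (by nlinarith)]
  have hne : (1 : ℝ) - r ≠ 0 := by linarith
  have h12 : (1 : ℝ) - r^2 = (1 - r) * (1 + r) := by ring
  rw [h12, mul_inv, mul_assoc, mul_assoc]
  congr 1
  rw [← logistic_eq x]
  field_simp
  ring

/-- Hurwitz (generalized Riemann) zeta function ζ(s, q) = Σ_{l=0}^∞ (l + q)^{−s},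
for natural exponent `s`. -/
noncomputable def hurwitzZetaNat (s : ℕ) (q : ℝ) : ℝ :=
  ∑' l : ℕ, 1 / ((l : ℝ) + q) ^ s

theorem integral_even_power_logistic (k : ℕ) (hk : 1 ≤ k) :
    ∫ x : ℝ, x ^ (2 * k) * (Real.exp (x / 2) / (Real.exp x + 1)) =
      ((Nat.factorial (2 * k) : ℝ) / 4 ^ k) *
        (hurwitzZetaNat (2 * k + 1) (1 / 4) - hurwitzZetaNat (2 * k + 1) (3 / 4)) := by
  set n := 2 * k with hn
  have hs : 1 < n + 1 := by omega
  set g : ℝ → ℝ := fun x => x ^ n * (Real.exp (x / 2) / (Real.exp x + 1)) with hg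
  -- evenness
  have heven : ∀ x : ℝ, g |x| = g x := by
    intro x
    rcases le_or_gt 0 x with h | h
    · rw [abs_of_nonneg h]
    · rw [abs_of_neg h, hg]
      simp only
      rw [show (-x) ^ n = x ^ n by rw [hn, pow_mul, pow_mul, neg_sq]]
      congr 1
      rw [show -x / 2 = -(x/2) by ring, ← logistic_eq, Real.exp_neg (x/2), Real.exp_neg x]
      rw [div_eq_div_iff (by positivity) (by positivity)]
      field_simp
      ring
  have step1 : ∫ x : ℝ, g x = 2 * ∫ x in Ioi (0:ℝ), g x := by
    rw [← integral_comp_abs (f := g)]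
    exact congrArg (integral volume) (funext fun x => (heven x).symm)
  -- series of functions
  set F : ℕ → ℝ → ℝ := fun m x =>
    x ^ n * Real.exp (-((2*(m:ℝ)+1/2) * x)) - x ^ n * Real.exp (-((2*(m:ℝ)+3/2) * x)) with hF
  have hFint : ∀ m : ℕ, IntegrableOn (F m) (Ioi 0) := fun m =>
    (aux_integrable n (by positivity)).sub (aux_integrable n (by positivity))
  have hFnonneg : ∀ m : ℕ, ∀ x ∈ Ioi (0:ℝ), 0 ≤ F m x := by
    intro m x hx
    have hx0 : 0 < x := hx
    have : Real.exp (-((2*(m:ℝ)+3/2) * x)) ≤ Real.exp (-((2*(m:ℝ)+1/2) * x)) := by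
      apply Real.exp_le_exp.mpr; nlinarith
    have hxn : 0 ≤ x ^ n := by positivity
    simp only [hF]
    nlinarith
  have hFval : ∀ m : ℕ, ∫ x in Ioi (0:ℝ), F m x
      = ((n.factorial : ℝ) / 2 ^ (n+1)) * (1 / ((m:ℝ) + 1/4) ^ (n+1) - 1 / ((m:ℝ) + 3/4) ^ (n+1)) := by
    intro m
    rw [hF]
    simp only
    rw [integral_sub (aux_integrable n (by positivity)) (aux_integrable n (by positivity)),
      aux_int n (show (0:ℝ) < 2*(m:ℝ)+1/2 by positivity),
      aux_int n (show (0:ℝ) < 2*(m:ℝ)+3/2 by positivity),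
      show (2*(m:ℝ)+1/2) = 2*((m:ℝ)+1/4) by ring,
      show (2*(m:ℝ)+3/2) = 2*((m:ℝ)+3/4) by ring, mul_pow, mul_pow]
    have h1 : ((m:ℝ)+1/4) ^ (n+1) ≠ 0 := by positivity
    have h2 : ((m:ℝ)+3/4) ^ (n+1) ≠ 0 := by positivity
    have h3 : (2:ℝ) ^ (n+1) ≠ 0 := by positivity
    field_simp
  have hsum1 : Summable fun m : ℕ => 1 / ((m:ℝ) + 1/4) ^ (n+1) :=
    summable_aux (by norm_num) (by norm_num) hs
  have hsum2 : Summable fun m : ℕ => 1 / ((m:ℝ) + 3/4) ^ (n+1) :=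
    summable_aux (by norm_num) (by norm_num) hs
  have hFsum : Summable fun m : ℕ => ∫ x in Ioi (0:ℝ), ‖F m x‖ := by
    have hn2 : ∀ m : ℕ, ∫ x in Ioi (0:ℝ), ‖F m x‖ = ∫ x in Ioi (0:ℝ), F m x := fun m =>
      setIntegral_congr_fun measurableSet_Ioi fun x hx => Real.norm_of_nonneg (hFnonneg m x hx)
    simp_rw [hn2, hFval]
    exact ((hsum1.sub hsum2).mul_left _)
  have step2 : ∫ x in Ioi (0:ℝ), g x = ∑' m : ℕ, ∫ x in Ioi (0:ℝ), F m x := by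
    rw [integral_tsum_of_summable_integral_norm hFint hFsum]
    exact (setIntegral_congr_fun measurableSet_Ioi fun x hx => (sum_ident n hx).symm)
  have step3 : ∑' m : ℕ, ∫ x in Ioi (0:ℝ), F m x
      = ((n.factorial : ℝ) / 2 ^ (n+1)) *
        (hurwitzZetaNat (n+1) (1/4) - hurwitzZetaNat (n+1) (3/4)) := by
    simp_rw [hFval]
    rw [tsum_mul_left, Summable.tsum_sub hsum1 hsum2]
    rfl
  have h4 : (2:ℝ) ^ (n+1) = 4 ^ k * 2 := by
    rw [hn, pow_succ, pow_mul]; norm_num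
  calc ∫ x : ℝ, g x = 2 * ∫ x in Ioi (0:ℝ), g x := step1
    _ = 2 * (((n.factorial : ℝ) / 2 ^ (n+1)) *
        (hurwitzZetaNat (n+1) (1/4) - hurwitzZetaNat (n+1) (3/4))) := by rw [step2, step3]
    _ = ((n.factorial : ℝ) / 4 ^ k) *
        (hurwitzZetaNat (n+1) (1/4) - hurwitzZetaNat (n+1) (3/4)) := by
      rw [h4]
      have h40 : (4:ℝ) ^ k ≠ 0 := by positivity
      field_simp
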